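/- Let V, Q be real Hilbert spaces, G, λ > 0, d a positive natural number, and α ∈ ℝ. Let ε : V → Q̃ and D : V → Q be bounded linear maps (playing the role of strain and divergence) such that for all w ∈ V, (2G/d)‖D w‖² + λ‖D w‖² ≤ 2G‖ε w‖² + λ‖D w‖². Suppose w ∈ V and r ∈ Q satisfy 2G⟨ε w, ε v⟩ + λ⟨D w, D v⟩ = α⟨r, D v⟩ for all v ∈ V. Then ‖D w‖ ≤ (α/((2G/d) + λ))‖r‖ (assuming α ≥ 0). -/

import Mathlib

open scoped RealInnerProductSpace

theorem div_increment_bound {V Q Q' : Type*}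
    [NormedAddCommGroup V] [InnerProductSpace ℝ V] [CompleteSpace V]
    [NormedAddCommGroup Q] [InnerProductSpace ℝ Q] [CompleteSpace Q]
    [NormedAddCommGroup Q'] [InnerProductSpace ℝ Q'] [CompleteSpace Q']
    (G lam : ℝ) (hG : 0 < G) (hlam : 0 < lam) (d : ℕ) (hd : 0 < d)
    (α : ℝ) (hα : 0 ≤ α)
    (ε : V →L[ℝ] Q') (D : V →L[ℝ] Q)
    (hcoer : ∀ w : V, (2*G/d) * ‖D w‖^2 + lam * ‖D w‖^2 ≤ 2*G*‖ε w‖^2 + lam * ‖D w‖^2)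
    (w : V) (r : Q)
    (heq : ∀ v : V, 2*G*⟪ε w, ε v⟫ + lam * ⟪D w, D v⟫ = α * ⟪r, D v⟫) :
    ‖D w‖ ≤ (α / ((2*G/d) + lam)) * ‖r‖ := by
  have hc : 0 < (2*G/d) + lam := by positivity
  rcases eq_or_ne (‖D w‖) 0 with h0 | h0
  · rw [h0]; positivity
  have hDpos : 0 < ‖D w‖ := lt_of_le_of_ne (norm_nonneg _) (Ne.symm h0)
  have h1 := heq w
  rw [real_inner_self_eq_norm_sq, real_inner_self_eq_norm_sq] at h1
  have h2 : ((2*G/d) + lam) * ‖D w‖^2 ≤ α * (‖r‖ * ‖D w‖) := by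
    have hcs : ⟪r, D w⟫ ≤ ‖r‖ * ‖D w‖ := real_inner_le_norm r (D w)
    have := hcoer w
    nlinarith
  have h3 : ((2*G/d) + lam) * ‖D w‖ ≤ α * ‖r‖ := by
    have := (mul_le_mul_iff_of_pos_right hDpos).mp (by nlinarith : ((2*G/d) + lam) * ‖D w‖ * ‖D w‖ ≤ α * ‖r‖ * ‖D w‖)
    linarith
  rw [div_mul_eq_mul_div, le_div_iff₀ hc]
  linarith [h3]
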